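/- arXiv:2108.11090 — 2 statements merged into one kernel-verified Lean document; each statement's English description precedes it below -/
import Mathlib

section
/- For every nonzero real number λ and every n ≥ 0, the identity (x)_{n,λ} = Σ_{k=0}^{n} S_{1,λ}(n,k) φ_{k,λ}(x) holds as polynomials in x. -/
open Nat PowerSeries Finset

noncomputable section

/-- λ-falling factorial (x)_{n,λ} = x(x−λ)···(x−(n−1)λ). -/
def dfall (l x : ℝ) (n : ℕ) : ℝ := ∏ i ∈ range n, (x - i * l)

/-- degenerate exponential e_λ^x(t) = Σ (x)_{n,λ} t^n/n! as a formal power series. -/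
def degExp (l x : ℝ) : PowerSeries ℝ := PowerSeries.mk fun n => dfall l x n / n !

/-- degenerate logarithm log_λ(1+t) = Σ_{n≥1} (∏_{j=1}^{n−1}(λ−j)) t^n/n!. -/
def degLog (l : ℝ) : PowerSeries ℝ :=
  PowerSeries.mk fun n => if n = 0 then 0 else (∏ j ∈ range (n - 1), (l - (j + 1))) / n !

/-- composition Σ_k a_k f^k, valid when f has zero constant term. -/
def psComp (a : ℕ → ℝ) (f : PowerSeries ℝ) : PowerSeries ℝ :=
  PowerSeries.mk fun n => ∑ k ∈ range (n + 1), a k * PowerSeries.coeff (R := ℝ) n (f ^ k)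

/-- e_λ^x(f), the degenerate exponential composed with f (f with zero constant term). -/
def degExpComp (l x : ℝ) (f : PowerSeries ℝ) : PowerSeries ℝ :=
  psComp (fun k => dfall l x k / k !) f

/-- degenerate Stirling numbers of the second kind. -/
def dS2 (l : ℝ) (n k : ℕ) : ℝ :=
  (n ! : ℝ) / k ! * PowerSeries.coeff (R := ℝ) n ((degExp l 1 - 1) ^ k)

/-- degenerate Stirling numbers of the first kind. -/
def dS1 (l : ℝ) (n k : ℕ) : ℝ :=
  (n ! : ℝ) / k ! * PowerSeries.coeff (R := ℝ) n (degLog l ^ k)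

/-- (signed) Stirling numbers of the first kind: coefficients of x(x-1)···(x-n+1). -/
def sS1 (n k : ℕ) : ℝ := (descPochhammer ℝ n).coeff k

/-- fully degenerate Bell polynomial φ_{n,λ}(x). -/
def dBell (l : ℝ) (n : ℕ) (x : ℝ) : ℝ := ∑ k ∈ range (n + 1), dS2 l n k * dfall l x k

/-- degenerate Whitney numbers of the second kind. -/
def dW (m : ℕ) (l : ℝ) (n k : ℕ) : ℝ :=
  (n ! : ℝ) / k ! *
    PowerSeries.coeff (R := ℝ) n (degExp l 1 * ((degExp l (m : ℝ) - 1) * PowerSeries.C (R := ℝ) (1 / m)) ^ k)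

/-- fully degenerate Dowling polynomial d_{m,λ}(n,x). -/
def dDowling (m : ℕ) (l : ℝ) (n : ℕ) (x : ℝ) : ℝ :=
  ∑ k ∈ range (n + 1), dW m l n k * dfall l x k

/-- division of a power series by t (coefficient shift). -/
def divT (f : PowerSeries ℝ) : PowerSeries ℝ :=
  PowerSeries.mk fun n => PowerSeries.coeff (R := ℝ) (n + 1) f

/-- degenerate Bernoulli polynomials β_{n,λ}(x): (t/(e_λ(t)−1)) e_λ^x(t) = Σ β_{n,λ}(x) tⁿ/n!. -/
def dBernoulliPoly (l : ℝ) (n : ℕ) (x : ℝ) : ℝ :=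
  (n ! : ℝ) * PowerSeries.coeff (R := ℝ) n ((divT (degExp l 1 - 1))⁻¹ * degExp l x)

/-- the λ-falling factorial polynomial (x)_{k,λ}. -/
def dfallPoly (l : ℝ) (k : ℕ) : Polynomial ℝ :=
  ∏ i ∈ range k, (Polynomial.X - Polynomial.C (i * l))

/-- degenerate poly-Bell polynomials B^{(r)}_{n,λ}(x). -/
def dPolyBell (r : ℤ) (l : ℝ) (n : ℕ) (x : ℝ) : ℝ :=
  (n ! : ℝ) * PowerSeries.coeff (R := ℝ) n
    (divT (psComp (fun k => if k = 0 then 0 else dfall l 1 k / ((k - 1)! * (k : ℝ) ^ r))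
        (degLog l)) *
      (divT (degExp l 1 - 1))⁻¹ * degExp l x)

/-- degenerate Bernoulli polynomials of the second kind b_{n,λ}(x). -/
def dBern2 (l : ℝ) (n : ℕ) (x : ℝ) : ℝ :=
  (n ! : ℝ) *
    PowerSeries.coeff (R := ℝ) n ((divT (degLog l))⁻¹ * PowerSeries.mk fun j => dfall 1 x j / j !)


lemma coeff_psComp (a : ℕ → ℝ) (f : PowerSeries ℝ) (n : ℕ) :
    PowerSeries.coeff (R := ℝ) n (psComp a f) = ∑ k ∈ range (n + 1), a k * PowerSeries.coeff (R := ℝ) n (f ^ k) := by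
  simp [psComp]

lemma coeff_pow_zero {f : PowerSeries ℝ} (hf : PowerSeries.constantCoeff (R := ℝ) f = 0) {n k : ℕ}
    (h : n < k) : PowerSeries.coeff (R := ℝ) n (f ^ k) = 0 := by
  have : (PowerSeries.X : PowerSeries ℝ) ^ k ∣ f ^ k :=
    pow_dvd_pow_of_dvd (PowerSeries.X_dvd_iff.2 hf) k
  exact (PowerSeries.X_pow_dvd_iff.1 this) n h

lemma coeff_psComp_ext {f : PowerSeries ℝ} (hf : PowerSeries.constantCoeff (R := ℝ) f = 0)
    (a : ℕ → ℝ) {n N : ℕ} (hn : n < N) :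
    PowerSeries.coeff (R := ℝ) n (psComp a f) = ∑ k ∈ range N, a k * PowerSeries.coeff (R := ℝ) n (f ^ k) := by
  rw [coeff_psComp]
  apply Finset.sum_subset (Finset.range_subset_range.2 hn)
  intro k _ hk
  rw [coeff_pow_zero hf (by simpa using hk), mul_zero]

lemma coeff_aeval {f : PowerSeries ℝ} (hf : PowerSeries.constantCoeff (R := ℝ) f = 0)
    (P : Polynomial ℝ) (n : ℕ) :
    PowerSeries.coeff (R := ℝ) n (Polynomial.aeval f P) =
      ∑ k ∈ range (n + 1), P.coeff k * PowerSeries.coeff (R := ℝ) n (f ^ k) := by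
  rw [Polynomial.aeval_eq_sum_range' (n := max (P.natDegree + 1) (n + 1))
    (lt_of_lt_of_le (Nat.lt_succ_self _) (le_max_left _ _)), map_sum]
  simp only [PowerSeries.coeff_smul, smul_eq_mul]
  symm
  apply Finset.sum_subset (Finset.range_subset_range.2 (le_max_right _ _))
  intro k _ hk
  rw [coeff_pow_zero hf (by simpa using hk), mul_zero]

lemma coeff_psComp_coeff {f : PowerSeries ℝ} (hf : PowerSeries.constantCoeff (R := ℝ) f = 0)
    (A : PowerSeries ℝ) {n N : ℕ} (hn : n < N) :
    PowerSeries.coeff (R := ℝ) n (psComp (fun k => PowerSeries.coeff (R := ℝ) k A) f) =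
      PowerSeries.coeff (R := ℝ) n (Polynomial.aeval f (PowerSeries.trunc N A)) := by
  rw [coeff_aeval hf, coeff_psComp]
  apply Finset.sum_congr rfl
  intro k hk
  rw [PowerSeries.coeff_trunc, if_pos (lt_of_le_of_lt (Nat.lt_succ_iff.1 (mem_range.1 hk)) hn)]

lemma psComp_mul {f : PowerSeries ℝ} (hf : PowerSeries.constantCoeff (R := ℝ) f = 0)
    (A B : PowerSeries ℝ) :
    psComp (fun k => PowerSeries.coeff (R := ℝ) k (A * B)) f =
      psComp (fun k => PowerSeries.coeff (R := ℝ) k A) f * psComp (fun k => PowerSeries.coeff (R := ℝ) k B) f := by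
  ext n
  rw [coeff_psComp_coeff hf _ (Nat.lt_succ_self n)]
  have h1 : ∀ k, k ∈ range (n+1) →
      (PowerSeries.trunc (n+1) (A*B)).coeff k * PowerSeries.coeff (R := ℝ) n (f ^ k) =
      (PowerSeries.trunc (n+1) A * PowerSeries.trunc (n+1) B).coeff k * PowerSeries.coeff (R := ℝ) n (f ^ k) := by
    intro k hk
    have hkn : k < n + 1 := mem_range.1 hk
    rw [PowerSeries.coeff_trunc, if_pos hkn]
    congr 1
    have := PowerSeries.coeff_mul_eq_coeff_trunc_mul_trunc (R := ℝ) A B hkn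
    rw [this, ← Polynomial.coe_mul, Polynomial.coeff_coe]
  rw [coeff_aeval hf, Finset.sum_congr rfl h1, ← coeff_aeval hf, map_mul,
    PowerSeries.coeff_mul, PowerSeries.coeff_mul]
  apply Finset.sum_congr rfl
  intro p hp
  rw [coeff_psComp_coeff hf A (Nat.lt_succ_of_le (Finset.HasAntidiagonal.antidiagonal.fst_le hp)),
    coeff_psComp_coeff hf B (Nat.lt_succ_of_le (Finset.HasAntidiagonal.antidiagonal.snd_le hp))]

lemma psComp_one {f : PowerSeries ℝ} :
    psComp (fun k => PowerSeries.coeff (R := ℝ) k (1 : PowerSeries ℝ)) f = 1 := by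
  ext n
  rw [coeff_psComp]
  rw [Finset.sum_eq_single 0]
  · simp
  · intro k _ hk
    simp [PowerSeries.coeff_one, hk]
  · simp

lemma psComp_pow {f : PowerSeries ℝ} (hf : PowerSeries.constantCoeff (R := ℝ) f = 0)
    (A : PowerSeries ℝ) (j : ℕ) :
    psComp (fun k => PowerSeries.coeff (R := ℝ) k (A ^ j)) f =
      (psComp (fun k => PowerSeries.coeff (R := ℝ) k A) f) ^ j := by
  induction j with
  | zero => simpa using psComp_one
  | succ j ih => rw [pow_succ, psComp_mul hf, ih, pow_succ]

lemma coeff_mul_congr {A A' B : PowerSeries ℝ} {n : ℕ}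
    (h : ∀ i ≤ n, PowerSeries.coeff (R := ℝ) i A = PowerSeries.coeff (R := ℝ) i A') :
    PowerSeries.coeff (R := ℝ) n (A * B) = PowerSeries.coeff (R := ℝ) n (A' * B) := by
  rw [PowerSeries.coeff_mul, PowerSeries.coeff_mul]
  exact Finset.sum_congr rfl fun p hp => by rw [h p.1 (Finset.HasAntidiagonal.antidiagonal.fst_le hp)]

lemma psComp_deriv {f : PowerSeries ℝ} (hf : PowerSeries.constantCoeff (R := ℝ) f = 0) (a : ℕ → ℝ) :
    d⁄dX ℝ (psComp a f) =
      psComp (fun k => ((k : ℝ) + 1) * a (k + 1)) f * d⁄dX ℝ f := by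
  ext n
  have hT : ∀ i ≤ n, PowerSeries.coeff (R := ℝ) i (psComp (fun k => ((k : ℝ) + 1) * a (k + 1)) f) =
      PowerSeries.coeff (R := ℝ) i (∑ k ∈ range (n + 1),
        PowerSeries.C (R := ℝ) (((k : ℝ) + 1) * a (k + 1)) * f ^ k) := by
    intro i hi
    rw [coeff_psComp_ext hf _ (Nat.lt_succ_of_le hi), map_sum]
    exact Finset.sum_congr rfl fun k _ => by rw [PowerSeries.coeff_C_mul]
  rw [coeff_mul_congr hT, PowerSeries.coeff_derivative, coeff_psComp_ext hf a
    (show n + 1 < n + 2 by omega), Finset.sum_mul, Finset.sum_mul, map_sum,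
    Finset.sum_range_succ']
  have h0 : a 0 * PowerSeries.coeff (R := ℝ) (n+1) (f ^ 0) * ((n:ℝ)+1) = 0 := by
    simp [PowerSeries.coeff_one, Nat.succ_ne_zero]
  rw [h0, add_zero]
  apply Finset.sum_congr rfl
  intro k _
  rw [show PowerSeries.C (R := ℝ) (((k:ℝ)+1) * a (k+1)) * f ^ k * d⁄dX ℝ f
      = PowerSeries.C (R := ℝ) (((k:ℝ)+1) * a (k+1)) * (f ^ k * d⁄dX ℝ f) from mul_assoc _ _ _,
    PowerSeries.coeff_C_mul]
  have hd : (d⁄dX ℝ) (f ^ (k+1)) = PowerSeries.C (R := ℝ) ((k:ℝ)+1) * (f ^ k * d⁄dX ℝ f) := by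
    rw [Derivation.leibniz_pow]
    simp only [Nat.add_sub_cancel, smul_eq_mul, nsmul_eq_mul]
    rw [show ((k+1 : ℕ) : PowerSeries ℝ) = PowerSeries.C (R := ℝ) ((k:ℝ)+1) by
      rw [← map_natCast (PowerSeries.C (R := ℝ)) (k+1)]; push_cast; ring_nf]
  have := PowerSeries.coeff_derivative (f ^ (k+1)) n
  calc a (k+1) * PowerSeries.coeff (R := ℝ) (n+1) (f ^ (k+1)) * ((n:ℝ)+1)
      = a (k+1) * PowerSeries.coeff (R := ℝ) n ((d⁄dX ℝ) (f ^ (k+1))) := by rw [this]; ring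
    _ = ((k:ℝ)+1) * a (k+1) * PowerSeries.coeff (R := ℝ) n (f ^ k * d⁄dX ℝ f) := by
        rw [hd, PowerSeries.coeff_C_mul]; ring




lemma constCoeff_degLog (l : ℝ) : PowerSeries.constantCoeff (R := ℝ) (degLog l) = 0 := by
  rw [← PowerSeries.coeff_zero_eq_constantCoeff_apply]; simp [degLog]

lemma dfall_one_zero (l : ℝ) : dfall l 1 0 = 1 := by simp [dfall]

lemma dfall_succ (l x : ℝ) (n : ℕ) : dfall l x (n+1) = dfall l x n * (x - n * l) := by
  simp [dfall, Finset.prod_range_succ]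

lemma ode_E (l : ℝ) :
    (1 + PowerSeries.C (R := ℝ) l * PowerSeries.X) * d⁄dX ℝ (degExp l 1) = degExp l 1 := by
  have expand : (1 + PowerSeries.C (R := ℝ) l * PowerSeries.X) * d⁄dX ℝ (degExp l 1)
      = d⁄dX ℝ (degExp l 1) + PowerSeries.C (R := ℝ) l * (PowerSeries.X * d⁄dX ℝ (degExp l 1)) := by
    ring
  ext n
  rw [expand, map_add, PowerSeries.coeff_C_mul, PowerSeries.coeff_derivative]
  match n with
  | 0 =>
    rw [PowerSeries.coeff_zero_X_mul]
    simp [degExp, dfall_one_zero, dfall_succ]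
  | (m+1) =>
    rw [PowerSeries.coeff_succ_X_mul, PowerSeries.coeff_derivative]
    simp only [degExp, PowerSeries.coeff_mk]
    rw [show m + 1 + 1 = m + 2 from rfl, dfall_succ l 1 (m+1)]
    have h2 : ((m+2)! : ℝ) = ((m:ℝ)+2) * (m+1)! := by
      rw [show m + 2 = (m+1)+1 from rfl, Nat.factorial_succ]; push_cast; ring
    have h1 : ((m+1)! : ℝ) ≠ 0 := Nat.cast_ne_zero.2 (Nat.factorial_ne_zero _)
    rw [h2]
    field_simp
    push_cast
    ring

lemma ode_L (l : ℝ) :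
    (1 + PowerSeries.X) * d⁄dX ℝ (degLog l) = 1 + PowerSeries.C (R := ℝ) l * degLog l := by
  have expand : (1 + PowerSeries.X) * d⁄dX ℝ (degLog l)
      = d⁄dX ℝ (degLog l) + PowerSeries.X * d⁄dX ℝ (degLog l) := by ring
  ext n
  rw [expand, map_add, map_add, PowerSeries.coeff_C_mul, PowerSeries.coeff_derivative]
  match n with
  | 0 =>
    rw [PowerSeries.coeff_zero_X_mul]
    simp [degLog, PowerSeries.coeff_one]
  | (m+1) =>
    rw [PowerSeries.coeff_succ_X_mul, PowerSeries.coeff_derivative]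
    simp only [degLog, PowerSeries.coeff_mk, Nat.succ_ne_zero, if_false,
      Nat.add_sub_cancel, PowerSeries.coeff_one]
    rw [show m + 1 + 1 = m + 2 from rfl, Finset.prod_range_succ]
    have h2 : ((m+2)! : ℝ) = ((m:ℝ)+2) * (m+1)! := by
      rw [show m + 2 = (m+1)+1 from rfl, Nat.factorial_succ]; push_cast; ring
    have h1 : ((m+1)! : ℝ) ≠ 0 := Nat.cast_ne_zero.2 (Nat.factorial_ne_zero _)
    rw [h2]
    field_simp
    push_cast
    ring

lemma psComp_linear {f : PowerSeries ℝ} (hf : PowerSeries.constantCoeff (R := ℝ) f = 0) (c : ℝ) :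
    psComp (fun k => PowerSeries.coeff (R := ℝ) k
      (1 + PowerSeries.C (R := ℝ) c * PowerSeries.X)) f = 1 + PowerSeries.C (R := ℝ) c * f := by
  ext n
  rw [coeff_psComp]
  have hco : ∀ k, PowerSeries.coeff (R := ℝ) k (1 + PowerSeries.C (R := ℝ) c * PowerSeries.X)
      = if k = 0 then 1 else if k = 1 then c else 0 := by
    intro k
    rw [map_add, PowerSeries.coeff_one, PowerSeries.coeff_C_mul, PowerSeries.coeff_X]
    match k with
    | 0 => simp
    | 1 => simp
    | (m+2) => simp
  match n with
  | 0 => simp [hco, PowerSeries.coeff_one, PowerSeries.coeff_zero_eq_constantCoeff, hf]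
  | (m+1) =>
    rw [Finset.sum_range_succ']
    have h0 : (if (0:ℕ) = 0 then (1:ℝ) else if (0:ℕ) = 1 then c else 0) = 1 := by simp
    have hsum : ∑ k ∈ range (m + 1),
        PowerSeries.coeff (R := ℝ) (k+1) (1 + PowerSeries.C (R := ℝ) c * PowerSeries.X) *
          PowerSeries.coeff (R := ℝ) (m+1) (f ^ (k+1))
        = c * PowerSeries.coeff (R := ℝ) (m+1) f := by
      rw [Finset.sum_eq_single_of_mem 0 (Finset.mem_range.2 (Nat.succ_pos m))]
      · simp [hco]
      · intro k _ hk
        rw [hco]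
        simp [hk, Nat.succ_ne_zero, show k + 1 ≠ 1 by omega]
    rw [hsum, hco 0, if_pos rfl, one_mul, pow_zero, map_add, PowerSeries.coeff_one,
      if_neg (Nat.succ_ne_zero m), PowerSeries.coeff_C_mul]
    ring

lemma comp_EL (l : ℝ) :
    psComp (fun k => PowerSeries.coeff (R := ℝ) k (degExp l 1)) (degLog l) = 1 + PowerSeries.X := by
  have hL : PowerSeries.constantCoeff (R := ℝ) (degLog l) = 0 := constCoeff_degLog l
  set L := degLog l with hLdef
  set G := psComp (fun k => PowerSeries.coeff (R := ℝ) k (degExp l 1)) L with hGdef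
  have hdG : d⁄dX ℝ G = psComp (fun k => PowerSeries.coeff (R := ℝ) k (d⁄dX ℝ (degExp l 1))) L *
      d⁄dX ℝ L := by
    rw [hGdef, psComp_deriv hL]
    have he : (fun k : ℕ => ((k:ℝ) + 1) * PowerSeries.coeff (R := ℝ) (k + 1) (degExp l 1))
        = fun k => PowerSeries.coeff (R := ℝ) k (d⁄dX ℝ (degExp l 1)) := by
      funext k; rw [PowerSeries.coeff_derivative]; ring
    rw [he]
  have hfact : G = (1 + PowerSeries.C (R := ℝ) l * L) *
      psComp (fun k => PowerSeries.coeff (R := ℝ) k (d⁄dX ℝ (degExp l 1))) L := by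
    conv_lhs => rw [hGdef, ← ode_E l]
    rw [psComp_mul hL, psComp_linear hL l]
  have hcancel : (1 + PowerSeries.C (R := ℝ) l * L) ≠ 0 := by
    intro h
    have := congrArg (PowerSeries.constantCoeff (R := ℝ)) h
    simp [hL] at this
  have hODE : (1 + PowerSeries.X) * d⁄dX ℝ G = G := by
    apply mul_left_cancel₀ hcancel
    calc (1 + PowerSeries.C (R := ℝ) l * L) * ((1 + PowerSeries.X) * d⁄dX ℝ G)
        = ((1 + PowerSeries.X) * d⁄dX ℝ L) *
          ((1 + PowerSeries.C (R := ℝ) l * L) *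
            psComp (fun k => PowerSeries.coeff (R := ℝ) k (d⁄dX ℝ (degExp l 1))) L) := by
          rw [hdG]; ring
      _ = (1 + PowerSeries.C (R := ℝ) l * L) * G := by rw [ode_L l, ← hfact, ← hLdef]
  have h0 : PowerSeries.coeff (R := ℝ) 0 G = 1 := by
    rw [hGdef, coeff_psComp]
    simp [degExp, dfall]
  have hrec : ∀ n : ℕ, PowerSeries.coeff (R := ℝ) n (d⁄dX ℝ G) +
      PowerSeries.coeff (R := ℝ) n (PowerSeries.X * d⁄dX ℝ G) = PowerSeries.coeff (R := ℝ) n G := by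
    intro n
    have := congrArg (PowerSeries.coeff (R := ℝ) n) hODE
    rw [show (1 + PowerSeries.X) * d⁄dX ℝ G = d⁄dX ℝ G + PowerSeries.X * d⁄dX ℝ G by ring]
      at this
    rw [← map_add]
    exact this
  have h1 : PowerSeries.coeff (R := ℝ) 1 G = 1 := by
    have := hrec 0
    rw [PowerSeries.coeff_zero_X_mul, PowerSeries.coeff_derivative, h0] at this
    simpa using this
  have hz : ∀ m : ℕ, PowerSeries.coeff (R := ℝ) (m + 2) G = 0 := by
    intro m
    induction m with
    | zero =>
      have h := hrec 1
      rw [PowerSeries.coeff_succ_X_mul, PowerSeries.coeff_derivative,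
        PowerSeries.coeff_derivative, h1] at h
      norm_num at h
      exact h
    | succ m ih =>
      have h := hrec (m + 2)
      rw [PowerSeries.coeff_succ_X_mul, PowerSeries.coeff_derivative,
        PowerSeries.coeff_derivative, ih] at h
      simp only [zero_mul, add_zero] at h
      have h4 : ((m + 2 : ℕ) : ℝ) + 1 ≠ 0 := by positivity
      exact (mul_eq_zero.1 h).resolve_right h4
  ext n
  match n with
  | 0 => rw [h0]; simp
  | 1 => rw [h1]; simp [PowerSeries.coeff_one]
  | (m+2) =>
    rw [hz m, map_add, PowerSeries.coeff_one, PowerSeries.coeff_X]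
    simp

lemma comp_FL (l : ℝ) :
    psComp (fun k => PowerSeries.coeff (R := ℝ) k (degExp l 1 - 1)) (degLog l) = PowerSeries.X := by
  have hsplit : psComp (fun k => PowerSeries.coeff (R := ℝ) k (degExp l 1 - 1)) (degLog l)
      = psComp (fun k => PowerSeries.coeff (R := ℝ) k (degExp l 1)) (degLog l) -
        psComp (fun k => PowerSeries.coeff (R := ℝ) k (1 : PowerSeries ℝ)) (degLog l) := by
    ext n
    rw [map_sub, coeff_psComp, coeff_psComp, coeff_psComp, ← Finset.sum_sub_distrib]
    apply Finset.sum_congr rfl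
    intro k _
    rw [map_sub, sub_mul]
  rw [hsplit, comp_EL, psComp_one]
  ring

lemma comp_FL_pow (l : ℝ) (j : ℕ) :
    psComp (fun k => PowerSeries.coeff (R := ℝ) k ((degExp l 1 - 1) ^ j)) (degLog l) =
      PowerSeries.X ^ j := by
  rw [psComp_pow (constCoeff_degLog l), comp_FL]



lemma constCoeff_F (l : ℝ) : PowerSeries.constantCoeff (R := ℝ) (degExp l 1 - 1) = 0 := by
  rw [← PowerSeries.coeff_zero_eq_constantCoeff_apply, map_sub, PowerSeries.coeff_one]
  simp [degExp, dfall]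

lemma dS2_eq_zero {l : ℝ} {k j : ℕ} (h : k < j) : dS2 l k j = 0 := by
  rw [dS2, coeff_pow_zero (constCoeff_F l) h, mul_zero]

lemma orthogonality (l : ℝ) (n j : ℕ) :
    ∑ k ∈ range (n + 1), dS1 l n k * dS2 l k j = if n = j then 1 else 0 := by
  have key : ∀ k, dS1 l n k * dS2 l k j =
      ((n)! : ℝ) / (j)! * (PowerSeries.coeff (R := ℝ) k ((degExp l 1 - 1) ^ j) *
        PowerSeries.coeff (R := ℝ) n (degLog l ^ k)) := by
    intro k
    rw [dS1, dS2]
    have hk : ((k)! : ℝ) ≠ 0 := Nat.cast_ne_zero.2 (Nat.factorial_ne_zero _)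
    field_simp
  calc ∑ k ∈ range (n + 1), dS1 l n k * dS2 l k j
      = ((n)! : ℝ) / (j)! * ∑ k ∈ range (n + 1),
          PowerSeries.coeff (R := ℝ) k ((degExp l 1 - 1) ^ j) *
            PowerSeries.coeff (R := ℝ) n (degLog l ^ k) := by
        rw [Finset.mul_sum]; exact Finset.sum_congr rfl fun k _ => key k
    _ = ((n)! : ℝ) / (j)! * PowerSeries.coeff (R := ℝ) n (PowerSeries.X ^ j : PowerSeries ℝ) := by
        rw [← comp_FL_pow l j, coeff_psComp]
    _ = if n = j then 1 else 0 := by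
        rw [PowerSeries.coeff_X_pow]
        by_cases h : n = j
        · subst h; simp [Nat.factorial_ne_zero, div_self]
        · simp [h]

theorem stmt6 (l : ℝ) (hl : l ≠ 0) (n : ℕ) (x : ℝ) :
    dfall l x n = ∑ k ∈ range (n + 1), dS1 l n k * dBell l k x := by
  have hext : ∀ k ∈ range (n + 1), dS1 l n k * dBell l k x =
      ∑ j ∈ range (n + 1), dS1 l n k * (dS2 l k j * dfall l x j) := by
    intro k hk
    rw [dBell, Finset.mul_sum]
    apply Finset.sum_subset (Finset.range_subset_range.2 (Nat.succ_le_succ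
      (Nat.lt_succ_iff.1 (mem_range.1 hk))))
    intro j _ hj
    rw [dS2_eq_zero (by simpa using hj), zero_mul, mul_zero]
  rw [Finset.sum_congr rfl hext, Finset.sum_comm]
  have : ∀ j ∈ range (n + 1),
      ∑ k ∈ range (n + 1), dS1 l n k * (dS2 l k j * dfall l x j) =
      (if n = j then 1 else 0) * dfall l x j := by
    intro j _
    rw [← orthogonality l n j, Finset.sum_mul]
    exact Finset.sum_congr rfl fun k _ => by ring
  rw [Finset.sum_congr rfl this]
  simp only [ite_mul, one_mul, zero_mul]
  rw [Finset.sum_ite_eq (range (n+1)) n (fun j => dfall l x j)]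
  simp


end
end

section
/- Let λ be a nonzero real number, m a positive integer, and x a real number. Then the formal power series identity e_λ^x((e_λ^m(t)−1)/m) = Σ_{n≥0} m^n φ_{n,λ/m}(x/m) t^n/n! holds in ℝ[[t]]; equivalently, for every n ≥ 0 the coefficient of t^n/n! in e_λ^x((e_λ^m(t)−1)/m) equals m^n Σ_{k=0}^{n} S_{2,λ/m}(n,k)(x/m)_{k,λ/m}. -/
open Nat PowerSeries Finset

noncomputable section

lemma dfall_scale (l x m : ℝ) (hm : m ≠ 0) (n : ℕ) :
    dfall l x n = m ^ n * dfall (l / m) (x / m) n := by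
  unfold dfall
  have h : ∀ i ∈ range n, x - i * l = m * (x / m - i * (l / m)) := by
    intro i _
    field_simp
  rw [Finset.prod_congr rfl h, Finset.prod_mul_distrib, Finset.prod_const,
    Finset.card_range]

lemma degExp_scale (l m x : ℝ) (hm : m ≠ 0) :
    degExp l x = PowerSeries.rescale m (degExp (l / m) (x / m)) := by
  ext n
  rw [PowerSeries.coeff_rescale]
  simp only [degExp, PowerSeries.coeff_mk, dfall_scale l x m hm n]
  ring

theorem stmt13 (l : ℝ) (hl : l ≠ 0) (m : ℕ) (hm : 0 < m) (x : ℝ) (n : ℕ) :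
    (n ! : ℝ) *
        PowerSeries.coeff (R := ℝ) n
          (degExpComp l x ((degExp l (m : ℝ) - 1) * PowerSeries.C (R := ℝ) (1 / m))) =
      (m : ℝ) ^ n * dBell (l / m) n (x / m) := by
  have hm' : (m : ℝ) ≠ 0 := Nat.cast_ne_zero.mpr hm.ne'
  have h1 : degExp l (m : ℝ) - 1
      = PowerSeries.rescale (m : ℝ) (degExp (l / m) 1 - 1) := by
    have h := degExp_scale l (m : ℝ) (m : ℝ) hm'
    rw [div_self hm'] at h
    rw [map_sub, map_one, ← h]
  have h2 : (degExp l (m : ℝ) - 1) * PowerSeries.C (R := ℝ) (1 / m)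
      = PowerSeries.rescale (m : ℝ) ((degExp (l / m) 1 - 1) * PowerSeries.C (R := ℝ) (1 / m)) := by
    have hC : PowerSeries.rescale (m : ℝ) (PowerSeries.C (R := ℝ) (1 / m))
        = PowerSeries.C (R := ℝ) (1 / m) := by
      ext j
      simp only [PowerSeries.coeff_rescale, PowerSeries.coeff_C]
      split <;> simp_all
    rw [map_mul, hC, h1]
  have h3 : ∀ k, PowerSeries.coeff (R := ℝ) n
      (((degExp l (m : ℝ) - 1) * PowerSeries.C (R := ℝ) (1 / m)) ^ k)
      = (m : ℝ) ^ n * (1 / m) ^ k * PowerSeries.coeff (R := ℝ) n ((degExp (l / m) 1 - 1) ^ k) := by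
    intro k
    rw [h2, ← map_pow, PowerSeries.coeff_rescale, mul_pow, ← map_pow,
      PowerSeries.coeff_mul_C]
    ring
  simp only [degExpComp, psComp, PowerSeries.coeff_mk, dBell, dS2]
  rw [Finset.mul_sum, Finset.mul_sum]
  refine Finset.sum_congr rfl fun k _ => ?_
  rw [h3 k, dfall_scale l x (m : ℝ) hm' k]
  have hk : (k ! : ℝ) ≠ 0 := Nat.cast_ne_zero.mpr k.factorial_ne_zero
  field_simp
  ring_nf
  rw [← mul_pow, mul_inv_cancel₀ hm', one_pow, one_mul]

end
end
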